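/- (Evolution of the generalized constraint-tightening variable.) Let ρ ∈ (0,1), α̃ ∈ K_∞ with α̃(ρc) ≤ ρ^λ α̃(c) for some λ > 0, and nonnegative sequences with w_i ≤ w*_{i+1} for i = 0,…,N−1 and w*_0 ≥ w_min. Define h_k := Σ_{i=0}^{k−1} α̃(ρ^{k−1−i} w_i) and h*_k := Σ_{i=0}^{k−1} α̃(ρ^{k−1−i} w*_i). Then for k = 0,…,N−1: h_k ≤ h*_{k+1} − α̃(ρ^k w*_0), and moreover h_N ≤ ρ^λ (h*_N − α̃(ρ^{N−1} w_min)) + α̃(w*_N). -/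

import Mathlib

/-- evolution of the generalized constraint-tightening variable,
Parts II and IV of the proof of Lemma 1. -/
theorem stmt_15 (ρ : ℝ) (hρ0 : 0 < ρ) (hρ1 : ρ < 1)
    (lam : ℝ) (hlam : 0 < lam)
    (αt : ℝ → ℝ) (hmono : MonotoneOn αt (Set.Ici 0))
    (hhom : ∀ c : ℝ, 0 ≤ c → αt (ρ * c) ≤ ρ ^ lam * αt c)
    (N : ℕ) (hN : 1 ≤ N)
    (w wstar : ℕ → ℝ) (hw : ∀ i, 0 ≤ w i) (hwstar : ∀ i, 0 ≤ wstar i)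
    (hdom : ∀ i < N, w i ≤ wstar (i + 1))
    (wmin : ℝ) (hwmin0 : 0 ≤ wmin) (hwmin : wmin ≤ wstar 0) :
    (∀ k < N, ∑ i ∈ Finset.range k, αt (ρ ^ (k - 1 - i) * w i)
        ≤ (∑ i ∈ Finset.range (k + 1), αt (ρ ^ (k - i) * wstar i))
            - αt (ρ ^ k * wstar 0)) ∧
    (∑ i ∈ Finset.range N, αt (ρ ^ (N - 1 - i) * w i)
        ≤ ρ ^ lam * ((∑ i ∈ Finset.range N, αt (ρ ^ (N - 1 - i) * wstar i))
              - αt (ρ ^ (N - 1) * wmin))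
          + αt (wstar N)) := by
  have hρ0' : (0:ℝ) ≤ ρ := hρ0.le
  have part1 : ∀ k < N, ∑ i ∈ Finset.range k, αt (ρ ^ (k - 1 - i) * w i)
        ≤ (∑ i ∈ Finset.range (k + 1), αt (ρ ^ (k - i) * wstar i))
            - αt (ρ ^ k * wstar 0) := by
    intro k hk
    rw [Finset.sum_range_succ']
    simp only [Nat.sub_zero]
    rw [add_sub_cancel_right]
    apply Finset.sum_le_sum
    intro i hi
    have hiN : i < N := lt_trans (Finset.mem_range.mp hi) hk
    have heq : k - (i + 1) = k - 1 - i := by omega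
    rw [heq]
    apply hmono
    · exact Set.mem_Ici.mpr (mul_nonneg (pow_nonneg hρ0' _) (hw i))
    · exact Set.mem_Ici.mpr (mul_nonneg (pow_nonneg hρ0' _) (hwstar _))
    · exact mul_le_mul_of_nonneg_left (hdom i hiN) (pow_nonneg hρ0' _)
  refine ⟨part1, ?_⟩
  obtain ⟨n, rfl⟩ : ∃ n, N = n + 1 := ⟨N - 1, by omega⟩
  have hrl : (0:ℝ) ≤ ρ ^ lam := Real.rpow_nonneg hρ0' lam
  simp only [Nat.add_sub_cancel]
  rw [Finset.sum_range_succ]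
  have hlast : αt (ρ ^ (n - n) * w n) ≤ αt (wstar (n + 1)) := by
    rw [Nat.sub_self, pow_zero, one_mul]
    exact hmono (Set.mem_Ici.mpr (hw n)) (Set.mem_Ici.mpr (hwstar _))
      (hdom n (Nat.lt_succ_self n))
  have hstep : ∑ i ∈ Finset.range n, αt (ρ ^ (n - i) * w i)
      ≤ ρ ^ lam * ∑ i ∈ Finset.range n, αt (ρ ^ (n - 1 - i) * w i) := by
    rw [Finset.mul_sum]
    apply Finset.sum_le_sum
    intro i hi
    have hi' := Finset.mem_range.mp hi
    have heq : ρ ^ (n - i) * w i = ρ * (ρ ^ (n - 1 - i) * w i) := by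
      have : n - i = (n - 1 - i) + 1 := by omega
      rw [this, pow_succ]; ring
    rw [heq]
    exact hhom _ (mul_nonneg (pow_nonneg hρ0' _) (hw i))
  have hp1 := part1 n (Nat.lt_succ_self n)
  have hmin : αt (ρ ^ n * wmin) ≤ αt (ρ ^ n * wstar 0) :=
    hmono (Set.mem_Ici.mpr (mul_nonneg (pow_nonneg hρ0' _) hwmin0))
      (Set.mem_Ici.mpr (mul_nonneg (pow_nonneg hρ0' _) (hwstar 0)))
      (mul_le_mul_of_nonneg_left hwmin (pow_nonneg hρ0' _))
  have hchain : ∑ i ∈ Finset.range n, αt (ρ ^ (n - i) * w i)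
      ≤ ρ ^ lam * ((∑ i ∈ Finset.range (n + 1), αt (ρ ^ (n - i) * wstar i))
          - αt (ρ ^ n * wmin)) := by
    calc ∑ i ∈ Finset.range n, αt (ρ ^ (n - i) * w i)
        ≤ ρ ^ lam * ∑ i ∈ Finset.range n, αt (ρ ^ (n - 1 - i) * w i) := hstep
      _ ≤ ρ ^ lam * ((∑ i ∈ Finset.range (n + 1), αt (ρ ^ (n - i) * wstar i))
            - αt (ρ ^ n * wstar 0)) := mul_le_mul_of_nonneg_left hp1 hrl
      _ ≤ _ := by
            apply mul_le_mul_of_nonneg_left _ hrl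
            linarith
  linarith
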